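/- arXiv:0810.5522 — 4 statements merged into one kernel-verified Lean document; each statement's English description precedes it below -/
import Mathlib

section
/- Let G be a finite simple graph and let u, v be two new vertices added to G, not adjacent to each other, each adjacent to exactly the same subset of vertices of G; call the resulting graph G~. If corank(A(G) + E) = 0 over Z_2, then corank(A(G~) + E) = 0, where E denotes the identity matrix of the appropriate size. -/
open Matrix LaurentPolynomial
open scoped Classical

noncomputable section

def adjMatS {V : Type} (G : SimpleGraph V) (s : Finset V) : Matrix s s (ZMod 2) :=
  fun i j => if G.Adj i.1 j.1 then 1 else 0

def corankS {V : Type} (G : SimpleGraph V) (s : Finset V) : ℕ :=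
  s.card - (adjMatS G s).rank

def adjMat {V : Type} [Fintype V] (G : SimpleGraph V) : Matrix V V (ZMod 2) :=
  fun i j => if G.Adj i j then 1 else 0

def corankM {m : Type} [Fintype m] (M : Matrix m m (ZMod 2)) : ℕ :=
  Fintype.card m - M.rank

def alphaCount {V : Type} [Fintype V] (σ : V → Bool) (s : Finset V) : ℕ :=
  (s.filter (fun i => σ i = false)).card + ((sᶜ).filter (fun i => σ i = true)).card

def bracket {V : Type} [Fintype V] (G : SimpleGraph V) (σ : V → Bool) : LaurentPolynomial ℚ :=
  ∑ s : Finset V, T (2 * (alphaCount σ s : ℤ) - (Fintype.card V : ℤ)) *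
    (-T 2 - T (-2)) ^ (corankS G s)

def lspan (p : LaurentPolynomial ℚ) : ℤ := (WithBot.unbotD 0 p.coeff.support.max) - (WithTop.untopD 0 p.coeff.support.min)

def Bmat {V : Type} [Fintype V] (G : SimpleGraph V) (x : V) : Matrix V V (ZMod 2) :=
  adjMat G + 1 + Matrix.single x x 1

def writhe {V : Type} [Fintype V] (G : SimpleGraph V) (σ : V → Bool) : ℤ :=
  ∑ x, (-1 : ℤ) ^ (corankM (Bmat G x)) * (if σ x then 1 else -1)

def extAdj {V : Type} (G : SimpleGraph V) (N : Set V) : V ⊕ Bool → V ⊕ Bool → Prop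
  | .inl i, .inl j => G.Adj i j
  | .inl i, .inr _ => i ∈ N
  | .inr _, .inl j => j ∈ N
  | .inr _, .inr _ => False

def ext2 {V : Type} (G : SimpleGraph V) (N : Set V) : SimpleGraph (V ⊕ Bool) where
  Adj := extAdj G N
  symm := by
    constructor
    rintro (i|b) (j|c) h
    · exact G.adj_symm h
    · exact h
    · exact h
    · exact h
  loopless := by
    constructor
    rintro (i|b) h
    · exact G.irrefl h
    · exact h

def optExt {V : Type} (G : SimpleGraph V) : SimpleGraph (Option V) where
  Adj x y := match x, y with
    | some i, some j => G.Adj i j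
    | _, _ => False
  symm := by
    constructor
    rintro (_|i) (_|j) h
    · exact h
    · exact h
    · exact h
    · exact G.adj_symm h
  loopless := by
    constructor
    rintro (_|i) h
    · exact h
    · exact G.irrefl h

lemma mulVec_injective_of_corankM {m : Type} [Fintype m] (M : Matrix m m (ZMod 2))
    (h : corankM M = 0) : Function.Injective M.mulVec := by
  have hle := M.rank_le_card_width
  have hrank : M.rank = Fintype.card m := le_antisymm hle (Nat.sub_eq_zero_iff_le.mp h)
  have htop : LinearMap.range M.mulVecLin = ⊤ := by
    apply Submodule.eq_top_of_finrank_eq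
    rw [← Matrix.rank, hrank, Module.finrank_pi]
  have hsurj : Function.Surjective M.mulVecLin := LinearMap.range_eq_top.mp htop
  have hinj : Function.Injective M.mulVecLin :=
    LinearMap.injective_iff_surjective.mpr hsurj
  simpa [Matrix.coe_mulVecLin] using hinj

lemma corankM_of_mulVec_injective {m : Type} [Fintype m] (M : Matrix m m (ZMod 2))
    (h : Function.Injective M.mulVec) : corankM M = 0 := by
  have hinj : Function.Injective M.mulVecLin := by
    simpa [Matrix.coe_mulVecLin] using h
  have : M.rank = Fintype.card m := by
    rw [Matrix.rank, LinearMap.finrank_range_of_inj hinj, Module.finrank_pi]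
  simp [corankM, this]

/-- Ω_g2 preserves corank(A+E)=0. -/
theorem corank_AE_ext2 {V : Type} [Fintype V] (G : SimpleGraph V) (N : Set V)
    (h : corankM (adjMat G + 1) = 0) :
    corankM (adjMat (ext2 G N) + 1) = 0 := by
  have h := mulVec_injective_of_corankM _ h
  apply corankM_of_mulVec_injective
  set M := adjMat G + 1 with hM
  set M' := adjMat (ext2 G N) + 1 with hM'
  -- entry computations
  have e1 : ∀ i j : V, M' (.inl i) (.inl j) = M i j := by
    intro i j
    simp [hM, hM', adjMat, Matrix.one_apply, ext2, extAdj]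
    congr
  have e2 : ∀ (i : V) (b : Bool), M' (.inl i) (.inr b) = if i ∈ N then 1 else 0 := by
    intro i b
    simp [hM', adjMat, Matrix.one_apply, ext2, extAdj]
    congr
  have e3 : ∀ (b : Bool) (j : V), M' (.inr b) (.inl j) = if j ∈ N then 1 else 0 := by
    intro b j
    simp [hM', adjMat, Matrix.one_apply, ext2, extAdj]
    congr
  have e4 : ∀ (b c : Bool), M' (.inr b) (.inr c) = if b = c then 1 else 0 := by
    intro b c
    have : ((1 : Matrix (V ⊕ Bool) (V ⊕ Bool) (ZMod 2)) (.inr b) (.inr c)) = if b = c then 1 else 0 := by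
      rcases eq_or_ne b c with rfl | hbc
      · simp [Matrix.one_apply_eq]
      · rw [Matrix.one_apply_ne (by simpa using hbc), if_neg hbc]
    simp [hM', adjMat, ext2, extAdj, this]
  -- injectivity via kernel
  have key : ∀ x : V ⊕ Bool → ZMod 2, M'.mulVec x = 0 → x = 0 := by
    intro x hx
    have hval : ∀ u, M'.mulVec x u = ∑ j : V, M' u (.inl j) * x (.inl j)
        + (M' u (.inr false) * x (.inr false) + M' u (.inr true) * x (.inr true)) := by
      intro u
      rw [Matrix.mulVec, dotProduct, Fintype.sum_sum_type]
      simp [Fintype.sum_bool, add_comm]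
    have hF := congrFun hx (.inr false)
    have hT := congrFun hx (.inr true)
    rw [hval] at hF hT
    simp only [e3, e4, Pi.zero_apply] at hF hT
    norm_num at hF hT
    -- hF : ∑ j, (if j ∈ N then 1 else 0) * x (.inl j) + x (.inr false) = 0
    -- hT : similar with true
    have hFT : x (.inr false) = x (.inr true) := by
      exact add_left_cancel (hF.trans hT.symm)
    have hsum : x (.inr false) + x (.inr true) = 0 := by
      rw [hFT]
      exact CharTwo.add_self_eq_zero _
    -- now the V part
    have hker : M.mulVec (fun j => x (.inl j)) = 0 := by
      funext i
      have hi := congrFun hx (.inl i)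
      rw [hval] at hi
      simp only [e1, e2, Pi.zero_apply] at hi
      rw [Matrix.mulVec, dotProduct, Pi.zero_apply]
      have hterm : (if i ∈ N then (1 : ZMod 2) else 0) * x (.inr false)
          + (if i ∈ N then 1 else 0) * x (.inr true) = 0 := by
        rw [← mul_add, hsum, mul_zero]
      linear_combination hi - hterm
    have hx0 : (fun j => x (.inl j)) = (0 : V → ZMod 2) := by
      apply h
      rw [hker, Matrix.mulVec_zero]
    have hxl : ∀ j, x (.inl j) = 0 := fun j => congrFun hx0 j
    have hxrF : x (.inr false) = 0 := by
      rw [← hF]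
      simp [hxl]
    funext u
    cases u with
    | inl j => exact hxl j
    | inr b => cases b with
      | false => exact hxrF
      | true => rw [← hFT]; exact hxrF
  intro x y hxy
  have : M'.mulVec (x - y) = 0 := by
    rw [Matrix.mulVec_sub, hxy, sub_self]
  have := key _ this
  exact sub_eq_zero.mp this
end
end

section
/- Let G be an adequate labeled graph on n vertices, i.e., for every state s' at distance 1 from the A-state s_A, corank A(G(s')) + 1 ≤ corank A(G(s_A)) + 1, and there is no such neighbouring state with exactly one more circle than the A-state; and similarly for the B-state. Then span⟨G⟩ = 4n − 4g(G), where g(G) is the atom genus of G. -/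
open Matrix LaurentPolynomial
open scoped Classical

noncomputable section

namespace SpanAux

open Module Submodule

section RankLemmas

variable {F : Type*} [Field F]

lemma rank_submatrix_left_le {m m' n : Type*} [Fintype m] [Fintype m'] [Fintype n]
    (A : Matrix m' n F) (f : m → m') : (A.submatrix f id).rank ≤ A.rank := by
  rw [Matrix.rank_eq_finrank_span_row, Matrix.rank_eq_finrank_span_row]
  refine Submodule.finrank_mono (Submodule.span_mono ?_)
  rintro _ ⟨i, rfl⟩
  exact ⟨f i, rfl⟩

lemma rank_submatrix_right_le {m n n' : Type*} [Fintype m] [Fintype n] [Fintype n']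
    (A : Matrix m n' F) (g : n → n') : (A.submatrix id g).rank ≤ A.rank := by
  rw [← Matrix.rank_transpose (A.submatrix id g), ← Matrix.rank_transpose A]
  exact rank_submatrix_left_le Aᵀ g

lemma rank_submatrix_le_gen {m m' n n' : Type*} [Fintype m] [Fintype m'] [Fintype n] [Fintype n']
    (A : Matrix m' n' F) (f : m → m') (g : n → n') : (A.submatrix f g).rank ≤ A.rank :=
  le_trans (rank_submatrix_right_le (A.submatrix f id) g) (rank_submatrix_left_le A f)

lemma rank_le_submatrix_left_add_one {m m' n : Type*} [Fintype m] [Fintype m'] [Fintype n]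
    (A : Matrix m' n F) (f : m → m') (x : m') (h : ∀ y, y = x ∨ ∃ i, f i = y) :
    A.rank ≤ (A.submatrix f id).rank + 1 := by
  rw [Matrix.rank_eq_finrank_span_row, Matrix.rank_eq_finrank_span_row]
  change finrank F (span F (Set.range A)) ≤ finrank F (span F (Set.range (A.submatrix f id))) + 1
  have hsub : Set.range A ⊆ insert (A x) (Set.range (A.submatrix f id)) := by
    rintro _ ⟨y, rfl⟩
    rcases h y with rfl | ⟨i, rfl⟩
    · exact Set.mem_insert _ _
    · exact Set.mem_insert_of_mem _ ⟨i, rfl⟩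
  have h1 : finrank F (span F (Set.range A)) ≤
      finrank F (span F (insert (A x) (Set.range (A.submatrix f id)))) :=
    Submodule.finrank_mono (Submodule.span_mono hsub)
  have h2 : span F (insert (A x) (Set.range (A.submatrix f id))) =
      span F {A x} ⊔ span F (Set.range (A.submatrix f id)) := by
    rw [Set.insert_eq, Submodule.span_union]
  have h3 : finrank F (span F ({A x} : Set (n → F))) ≤ 1 := by
    by_cases hv : A x = (0 : n → F)
    · rw [hv, Submodule.span_zero_singleton]; simp
    · rw [finrank_span_singleton hv]
  have h4 := Submodule.finrank_add_le_finrank_add_finrank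
    (span F ({A x} : Set (n → F))) (span F (Set.range (A.submatrix f id)))
  rw [h2] at h1
  omega

lemma rank_le_submatrix_right_add_one {m n n' : Type*} [Fintype m] [Fintype n] [Fintype n']
    (A : Matrix m n' F) (g : n → n') (x : n') (h : ∀ y, y = x ∨ ∃ i, g i = y) :
    A.rank ≤ (A.submatrix id g).rank + 1 := by
  rw [← Matrix.rank_transpose A, ← Matrix.rank_transpose (A.submatrix id g)]
  exact rank_le_submatrix_left_add_one Aᵀ g x h

lemma rank_le_submatrix_add_two {m m' : Type*} [Fintype m] [Fintype m']
    (A : Matrix m' m' F) (f : m → m') (x : m') (h : ∀ y, y = x ∨ ∃ i, f i = y) :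
    A.rank ≤ (A.submatrix f f).rank + 2 := by
  have h1 := rank_le_submatrix_left_add_one A f x h
  have h2 := rank_le_submatrix_right_add_one (A.submatrix f id) f x h
  have h3 : (A.submatrix f id).submatrix id f = A.submatrix f f := rfl
  rw [h3] at h2
  omega

end RankLemmas

section CorankLemmas

variable {V : Type} (G : SimpleGraph V)

lemma corank_insert_bounds {s : Finset V} {x : V} (hx : x ∉ s) :
    corankS G (insert x s) ≤ corankS G s + 1 ∧ corankS G s ≤ corankS G (insert x s) + 1 := by
  classical
  set s' : Finset V := insert x s with hs'
  have hxs' : x ∈ s' := Finset.mem_insert_self x s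
  let inc : s → s' := fun i => ⟨i.1, Finset.mem_insert_of_mem i.2⟩
  have hMsub : adjMatS G s = (adjMatS G s').submatrix inc inc := rfl
  have hsurj : ∀ y : s', y = (⟨x, hxs'⟩ : s') ∨ ∃ i : s, inc i = y := by
    rintro ⟨y, hy⟩
    rcases Finset.mem_insert.mp hy with rfl | hy'
    · exact Or.inl rfl
    · exact Or.inr ⟨⟨y, hy'⟩, rfl⟩
  have h1 : (adjMatS G s).rank ≤ (adjMatS G s').rank := by
    rw [hMsub]; exact rank_submatrix_le_gen _ _ _
  have h2 : (adjMatS G s').rank ≤ (adjMatS G s).rank + 2 := by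
    rw [hMsub]; exact rank_le_submatrix_add_two _ inc _ hsurj
  have hc1 : (adjMatS G s).rank ≤ s.card :=
    le_trans (Matrix.rank_le_card_width _) (le_of_eq (Fintype.card_coe s))
  have hc2 : (adjMatS G s').rank ≤ s'.card :=
    le_trans (Matrix.rank_le_card_width _) (le_of_eq (Fintype.card_coe s'))
  have hcard : s'.card = s.card + 1 := Finset.card_insert_of_notMem hx
  unfold corankS
  omega

lemma symmDiff_singleton_mem {s : Finset V} {x : V} (hx : x ∈ s) :
    symmDiff s {x} = s.erase x := by
  ext y
  by_cases hyx : y = x <;>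
    simp [Finset.mem_symmDiff, Finset.mem_erase, hyx, hx]

lemma symmDiff_singleton_not_mem {s : Finset V} {x : V} (hx : x ∉ s) :
    symmDiff s {x} = insert x s := by
  ext y
  by_cases hyx : y = x <;>
    simp [Finset.mem_symmDiff, Finset.mem_insert, hyx, hx]

lemma corank_symmDiff_bounds (s : Finset V) (x : V) :
    corankS G (symmDiff s {x}) ≤ corankS G s + 1 ∧
      corankS G s ≤ corankS G (symmDiff s {x}) + 1 := by
  by_cases hx : x ∈ s
  · rw [symmDiff_singleton_mem (V := V) hx]
    have h := corank_insert_bounds G (s := s.erase x) (x := x) (Finset.notMem_erase x s)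
    rw [Finset.insert_erase hx] at h
    exact ⟨h.2, h.1⟩
  · rw [symmDiff_singleton_not_mem (V := V) hx]
    exact corank_insert_bounds G hx

lemma corank_le_of_adequate (sA : Finset V)
    (hA : ∀ x : V, corankS G (symmDiff sA {x}) ≠ corankS G sA + 1) :
    ∀ s : Finset V, s ≠ sA → corankS G s + 1 ≤ corankS G sA + (symmDiff s sA).card := by
  suffices H : ∀ d : ℕ, ∀ s : Finset V, (symmDiff s sA).card = d → s ≠ sA →
      corankS G s + 1 ≤ corankS G sA + (symmDiff s sA).card by
    exact fun s hs => H _ s rfl hs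
  intro d
  induction d using Nat.strong_induction_on with
  | _ d ih =>
    intro s hd hne
    have hnonempty : symmDiff s sA ≠ ∅ := by
      intro h
      exact hne (symmDiff_eq_bot.mp h)
    obtain ⟨x, hx⟩ := Finset.nonempty_iff_ne_empty.mpr hnonempty
    set s'' : Finset V := symmDiff s {x} with hs''
    have hcancel : symmDiff s'' {x} = s := by
      rw [hs'', symmDiff_symmDiff_cancel_right]
    have hsd : symmDiff s'' sA = (symmDiff s sA).erase x := by
      have h1 : symmDiff s'' sA = symmDiff (symmDiff s sA) {x} := by
        rw [hs'', symmDiff_assoc, symmDiff_assoc, symmDiff_comm ({x} : Finset V) sA]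
      rw [h1, symmDiff_singleton_mem (V := V) hx]
    have hcard : (symmDiff s'' sA).card = d - 1 := by
      rw [hsd, Finset.card_erase_of_mem hx, hd]
    have hd1 : 1 ≤ d := by
      rw [← hd]
      exact Finset.card_pos.mpr ⟨x, hx⟩
    have hbound := corank_symmDiff_bounds G s'' x
    rw [hcancel] at hbound
    by_cases hcase : s'' = sA
    · have hseq : s = symmDiff sA {x} := by
        rw [← hcancel, hcase]
      have h1 := (corank_symmDiff_bounds G sA x).1
      have h2 := hA x
      have hd' : d = 1 := by
        have : symmDiff s sA = {x} := by
          rw [hseq, symmDiff_comm, ← symmDiff_assoc, symmDiff_self]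
          simp
        rw [← hd, this, Finset.card_singleton]
      rw [hd, hd']
      rw [hseq]
      omega
    · have hih := ih (d - 1) (by omega) s'' hcard hcase
      rw [hcard] at hih
      rw [hd]
      omega

end CorankLemmas

section AlphaLemmas

variable {V : Type} [Fintype V] (σ : V → Bool)

lemma alpha_eq_card_symmDiff_B (s : Finset V) :
    alphaCount σ s = (symmDiff s (Finset.univ.filter (fun i => σ i = true))).card := by
  classical
  set sB := Finset.univ.filter (fun i => σ i = true) with hsB
  have h1 : s.filter (fun i => σ i = false) = s \ sB := by
    ext y
    simp [hsB, Finset.mem_sdiff, Finset.mem_filter]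
  have h2 : (sᶜ).filter (fun i => σ i = true) = sB \ s := by
    ext y
    simp [hsB, Finset.mem_sdiff, Finset.mem_filter, Finset.mem_compl, and_comm]
  have h3 : symmDiff s sB = (s \ sB) ∪ (sB \ s) := by
    rw [symmDiff_def]
    rfl
  rw [alphaCount, h1, h2, h3, Finset.card_union_of_disjoint disjoint_sdiff_sdiff]

lemma symmDiff_B_compl (s : Finset V) :
    symmDiff s (Finset.univ.filter (fun i => σ i = true)) =
      (symmDiff s (Finset.univ.filter (fun i => σ i = false)))ᶜ := by
  ext y
  by_cases hy : y ∈ s <;> cases hσ : σ y <;>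
    simp only [Finset.mem_symmDiff, Finset.mem_compl, Finset.mem_filter, Finset.mem_univ,
      true_and, hy, hσ] <;> tauto

lemma alpha_add_card_symmDiff_A (s : Finset V) :
    alphaCount σ s + (symmDiff s (Finset.univ.filter (fun i => σ i = false))).card
      = Fintype.card V := by
  rw [alpha_eq_card_symmDiff_B, symmDiff_B_compl, Finset.card_compl]
  have := Finset.card_le_univ (symmDiff s (Finset.univ.filter (fun i => σ i = false)))
  omega

end AlphaLemmas

section LaurentLemmas

lemma pow_expand (c : ℕ) :
    ((-T 2 - T (-2) : LaurentPolynomial ℚ)) ^ c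
      = ∑ i ∈ Finset.range (c+1),
          C ((-1)^c * (c.choose i) : ℚ) * T (4*(i:ℤ) - 2*(c:ℤ)) := by
  have h : (-T 2 - T (-2) : LaurentPolynomial ℚ) = C (-1) * (T 2 + T (-2)) := by
    rw [_root_.map_neg, _root_.map_one]
    ring
  rw [h, mul_pow, add_pow, Finset.mul_sum]
  refine Finset.sum_congr rfl fun i hi => ?_
  have hi' : i ≤ c := by
    have := Finset.mem_range.mp hi
    omega
  have hT : (T 2 : LaurentPolynomial ℚ) ^ i * (T (-2)) ^ (c - i) = T (4*(i:ℤ) - 2*(c:ℤ)) := by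
    rw [T_pow, T_pow, ← T_add]
    congr 1
    have : ((c - i : ℕ) : ℤ) = (c : ℤ) - (i : ℤ) := by
      push_cast [hi']
      ring
    rw [this]
    ring
  rw [hT]
  have hcast : ((c.choose i : ℕ) : LaurentPolynomial ℚ) = C ((c.choose i : ℕ) : ℚ) := by
    rw [← map_natCast (C : ℚ →+* LaurentPolynomial ℚ)]
  rw [hcast, ← map_pow, ← mul_assoc]
  rw [_root_.map_mul]
  ring_nf

lemma term_apply (D : ℤ) (c : ℕ) (d : ℤ) :
    ((T D * (-T 2 - T (-2)) ^ c : LaurentPolynomial ℚ)).coeff d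
      = ∑ i ∈ Finset.range (c+1),
          if D + 4*(i:ℤ) - 2*(c:ℤ) = d then ((-1)^c * (c.choose i) : ℚ) else 0 := by
  rw [pow_expand, Finset.mul_sum]
  have hterm : ∀ i : ℕ, T D * (C ((-1)^c * (c.choose i) : ℚ) * T (4*(i:ℤ) - 2*(c:ℤ)))
      = AddMonoidAlgebra.single (D + 4*(i:ℤ) - 2*(c:ℤ)) ((-1)^c * (c.choose i) : ℚ) := by
    intro i
    rw [T_mul, mul_T_assoc, single_eq_C_mul_T]
    congr 1
    ring
  simp_rw [hterm]
  rw [AddMonoidAlgebra.coeff_sum, Finset.sum_apply']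
  refine Finset.sum_congr rfl fun i _ => ?_
  rw [AddMonoidAlgebra.coeff_single_apply]

lemma term_apply_top (D : ℤ) (c : ℕ) :
    ((T D * (-T 2 - T (-2)) ^ c : LaurentPolynomial ℚ)).coeff (D + 2*(c:ℤ)) = (-1)^c := by
  rw [term_apply]
  rw [Finset.sum_eq_single_of_mem c (Finset.self_mem_range_succ c)]
  · rw [if_pos (by ring), Nat.choose_self]
    norm_num
  · intro i hi hne
    rw [if_neg]
    have := Finset.mem_range.mp hi
    omega

lemma term_apply_bot (D : ℤ) (c : ℕ) :
    ((T D * (-T 2 - T (-2)) ^ c : LaurentPolynomial ℚ)).coeff (D - 2*(c:ℤ)) = (-1)^c := by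
  rw [term_apply]
  rw [Finset.sum_eq_single_of_mem 0 (Finset.mem_range.mpr (by omega))]
  · rw [if_pos (by push_cast; ring), Nat.choose_zero_right]
    norm_num
  · intro i hi hne
    rw [if_neg]
    omega

lemma term_apply_eq_zero (D : ℤ) (c : ℕ) (d : ℤ)
    (h : d < D - 2*(c:ℤ) ∨ D + 2*(c:ℤ) < d) :
    ((T D * (-T 2 - T (-2)) ^ c : LaurentPolynomial ℚ)).coeff d = 0 := by
  rw [term_apply]
  refine Finset.sum_eq_zero fun i hi => ?_
  have := Finset.mem_range.mp hi
  rw [if_neg]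
  rcases h with h | h <;> omega

end LaurentLemmas

end SpanAux

open SpanAux

/-- For an adequate labeled graph, span⟨G⟩ = 4n - 4g(G)
    = 2n + 2(k-1) + 2(l-1). -/
theorem span_adequate {V : Type} [Fintype V] (G : SimpleGraph V) (σ : V → Bool)
    (hA : ∀ x : V, corankS G (symmDiff (Finset.univ.filter (fun i => σ i = false)) {x}) ≠
      corankS G (Finset.univ.filter (fun i => σ i = false)) + 1)
    (hB : ∀ x : V, corankS G (symmDiff (Finset.univ.filter (fun i => σ i = true)) {x}) ≠
      corankS G (Finset.univ.filter (fun i => σ i = true)) + 1) :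
    lspan (bracket G σ) = 2 * (Fintype.card V : ℤ) +
      2 * (corankS G (Finset.univ.filter (fun i => σ i = false)) : ℤ) +
      2 * (corankS G (Finset.univ.filter (fun i => σ i = true)) : ℤ) := by
  classical
  set sA := Finset.univ.filter (fun i => σ i = false) with hsA
  set sB := Finset.univ.filter (fun i => σ i = true) with hsB
  set n' := Fintype.card V with hn'
  set k := corankS G sA with hk
  set l := corankS G sB with hl
  have hAind := corank_le_of_adequate G sA hA
  have hBind := corank_le_of_adequate G sB hB
  have halphaA : ∀ s : Finset V, alphaCount σ s + (symmDiff s sA).card = n' :=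
    fun s => alpha_add_card_symmDiff_A σ s
  have halphaB : ∀ s : Finset V, alphaCount σ s = (symmDiff s sB).card :=
    fun s => alpha_eq_card_symmDiff_B σ s
  have halphasA : alphaCount σ sA = n' := by
    have h := halphaA sA
    rw [symmDiff_self] at h
    simpa using h
  have halphasB : alphaCount σ sB = 0 := by
    have h := halphaB sB
    rw [symmDiff_self] at h
    simpa using h
  -- strict upper bound for states other than the A-state
  have hubs : ∀ s : Finset V, s ≠ sA →
      2*(alphaCount σ s : ℤ) - n' + 2*(corankS G s : ℤ) ≤ (n' : ℤ) + 2*k - 2 := by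
    intro s hs
    have h1 := hAind s hs
    have h2 := halphaA s
    omega
  -- strict lower bound for states other than the B-state
  have hlbs : ∀ s : Finset V, s ≠ sB →
      -(n' : ℤ) - 2*l + 2 ≤ 2*(alphaCount σ s : ℤ) - n' - 2*(corankS G s : ℤ) := by
    intro s hs
    have h1 := hBind s hs
    have h2 := halphaB s
    omega
  have htop : (bracket G σ).coeff ((n' : ℤ) + 2*k) = (-1)^k := by
    unfold bracket
    rw [AddMonoidAlgebra.coeff_sum, Finset.sum_apply']
    rw [Finset.sum_eq_single_of_mem sA (Finset.mem_univ sA)]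
    · have hD : (2*(alphaCount σ sA : ℤ) - (n' : ℤ)) = (n' : ℤ) := by
        rw [halphasA]; ring
      rw [hD]
      exact term_apply_top (n' : ℤ) k
    · intro s _ hs
      apply term_apply_eq_zero
      right
      have := hubs s hs
      omega
  have hbot : (bracket G σ).coeff (-(n' : ℤ) - 2*l) = (-1)^l := by
    unfold bracket
    rw [AddMonoidAlgebra.coeff_sum, Finset.sum_apply']
    rw [Finset.sum_eq_single_of_mem sB (Finset.mem_univ sB)]
    · have hD : (2*(alphaCount σ sB : ℤ) - (n' : ℤ)) = -(n' : ℤ) := by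
        rw [halphasB]; push_cast; ring
      rw [hD]
      exact term_apply_bot (-(n' : ℤ)) l
    · intro s _ hs
      apply term_apply_eq_zero
      left
      have := hlbs s hs
      omega
  have htopzero : ∀ d : ℤ, (n' : ℤ) + 2*k < d → (bracket G σ).coeff d = 0 := by
    intro d hd
    unfold bracket
    rw [AddMonoidAlgebra.coeff_sum, Finset.sum_apply']
    refine Finset.sum_eq_zero fun s _ => ?_
    apply term_apply_eq_zero
    right
    by_cases hs : s = sA
    · subst hs
      have := halphasA
      omega
    · have := hubs s hs
      omega
  have hbotzero : ∀ d : ℤ, d < -(n' : ℤ) - 2*l → (bracket G σ).coeff d = 0 := by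
    intro d hd
    unfold bracket
    rw [AddMonoidAlgebra.coeff_sum, Finset.sum_apply']
    refine Finset.sum_eq_zero fun s _ => ?_
    apply term_apply_eq_zero
    left
    by_cases hs : s = sB
    · subst hs
      have := halphasB
      omega
    · have := hlbs s hs
      omega
  have hne : ((-1 : ℚ))^k ≠ 0 := pow_ne_zero _ (by norm_num)
  have hne' : ((-1 : ℚ))^l ≠ 0 := pow_ne_zero _ (by norm_num)
  have hmemtop : ((n' : ℤ) + 2*k) ∈ (bracket G σ).coeff.support :=
    Finsupp.mem_support_iff.mpr (by rw [htop]; exact hne)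
  have hmembot : (-(n' : ℤ) - 2*l) ∈ (bracket G σ).coeff.support :=
    Finsupp.mem_support_iff.mpr (by rw [hbot]; exact hne')
  have hmax : (bracket G σ).coeff.support.max = ((n' : ℤ) + 2*k : ℤ) := by
    apply le_antisymm
    · refine Finset.max_le fun a ha => ?_
      by_contra hlt
      push_neg at hlt
      rw [WithBot.coe_lt_coe] at hlt
      exact Finsupp.mem_support_iff.mp ha (htopzero a hlt)
    · exact Finset.le_max hmemtop
  have hmin : (bracket G σ).coeff.support.min = (-(n' : ℤ) - 2*l : ℤ) := by
    apply le_antisymm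
    · exact Finset.min_le hmembot
    · refine Finset.le_min fun a ha => ?_
      by_contra hlt
      push_neg at hlt
      rw [WithTop.coe_lt_coe] at hlt
      exact Finsupp.mem_support_iff.mp ha (hbotzero a hlt)
  rw [lspan, hmax, hmin, WithBot.unbotD_coe, WithTop.untopD_coe]
  ring
end
end

section
/- Let G be an alternating labeled graph (k + l = n + 2) with no isolated vertices, on n vertices. Then span⟨G⟩ = 4n; in particular, for any labeled graph G' representing the same Kauffman bracket up to units (i.e., ⟨G'⟩ = (−a)^{3m}⟨G⟩ for some integer m) with n' vertices, one has n' ≥ n. -/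
open Matrix LaurentPolynomial
open scoped Classical

noncomputable section

namespace AltAux

lemma apply_T_mul (e : ℤ) (p : LaurentPolynomial ℚ) (k : ℤ) :
    (T e * p : LaurentPolynomial ℚ).coeff k = p.coeff (k - e) := by
  have h := AddMonoidAlgebra.coeff_single_mul_apply p (1 : ℚ) e k
  rw [show (T e : LaurentPolynomial ℚ) = AddMonoidAlgebra.single e 1 from rfl]
  rw [h, one_mul, neg_add_eq_sub]

lemma apply_C_mul (a : ℚ) (p : LaurentPolynomial ℚ) (k : ℤ) :
    (C a * p : LaurentPolynomial ℚ).coeff k = a * p.coeff k := by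
  rw [← LaurentPolynomial.single_eq_C]
  exact AddMonoidAlgebra.coeff_single_zero_mul p a k

lemma mrank_zero_iff {n : Type} [Fintype n] [DecidableEq n] (A : Matrix n n (ZMod 2)) :
    A.rank = 0 ↔ A = 0 := by
  constructor
  · intro h
    have h2 : LinearMap.range A.mulVecLin = ⊥ := by
      rw [← Submodule.finrank_eq_zero (R := ZMod 2)]
      exact h
    have h3 : A.mulVecLin = 0 := LinearMap.range_eq_bot.mp h2
    ext i j
    have h4 : A.mulVec (Pi.single j 1) = 0 := by
      have := congrArg (fun f => f (Pi.single j (1 : ZMod 2))) (congrArg DFunLike.coe h3)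
      simpa using this
    have h6 := congrFun h4 i
    rw [congrFun (Matrix.mulVec_single_one A j) i] at h6
    simpa using h6
  · rintro rfl; simp

def q : LaurentPolynomial ℚ := T 2 + T (-2)

lemma apply_q_pow_succ (c : ℕ) (k : ℤ) :
    (q ^ (c + 1)).coeff k = (q ^ c).coeff (k - 2) + (q ^ c).coeff (k + 2) := by
  rw [pow_succ', q, add_mul, AddMonoidAlgebra.coeff_add, Finsupp.add_apply, apply_T_mul, apply_T_mul, sub_neg_eq_add]

lemma q_pow_bound (c : ℕ) : ∀ k : ℤ, (q ^ c).coeff k ≠ 0 → -(2 * (c : ℤ)) ≤ k ∧ k ≤ 2 * c := by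
  induction c with
  | zero =>
    intro k h
    rcases eq_or_ne k 0 with rfl | hk
    · simp
    · exfalso; apply h
      rw [pow_zero, AddMonoidAlgebra.one_def, AddMonoidAlgebra.coeff_single]
      exact Finsupp.single_eq_of_ne' (Ne.symm hk)
  | succ c ih =>
    intro k h
    rw [apply_q_pow_succ] at h
    have h2 : (q ^ c).coeff (k - 2) ≠ 0 ∨ (q ^ c).coeff (k + 2) ≠ 0 := by
      by_contra hc
      push_neg at hc
      rw [hc.1, hc.2, add_zero] at h
      exact h rfl
    rcases h2 with h2 | h2
    · obtain ⟨a, b⟩ := ih _ h2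
      push_cast
      constructor <;> omega
    · obtain ⟨a, b⟩ := ih _ h2
      push_cast
      constructor <;> omega

lemma q_pow_top (c : ℕ) : (q ^ c).coeff (2 * (c : ℤ)) = 1 := by
  induction c with
  | zero =>
    have h : (2 * ((0:ℕ) : ℤ)) = 0 := by norm_num
    rw [pow_zero, h, AddMonoidAlgebra.one_def, AddMonoidAlgebra.coeff_single]
    exact Finsupp.single_eq_same
  | succ c ih =>
    rw [apply_q_pow_succ]
    have h0 : (q ^ c).coeff (2 * ((c : ℤ) + 1) + 2) = 0 := by
      by_contra h
      have := (q_pow_bound c _ h).2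
      omega
    have h1 : (2 * ((c : ℤ) + 1) - 2) = 2 * c := by ring
    push_cast
    push_cast at ih h1 h0
    rw [h1, ih, h0, add_zero]

lemma q_pow_bot (c : ℕ) : (q ^ c).coeff (-(2 * (c : ℤ))) = 1 := by
  induction c with
  | zero =>
    have h : (-(2 * ((0:ℕ) : ℤ))) = 0 := by norm_num
    rw [pow_zero, h, AddMonoidAlgebra.one_def, AddMonoidAlgebra.coeff_single]
    exact Finsupp.single_eq_same
  | succ c ih =>
    rw [apply_q_pow_succ]
    have h0 : (q ^ c).coeff (-(2 * ((c : ℤ) + 1)) - 2) = 0 := by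
      by_contra h
      have := (q_pow_bound c _ h).1
      omega
    have h1 : (-(2 * ((c : ℤ) + 1)) + 2) = -(2 * c) := by ring
    push_cast
    push_cast at ih h1 h0
    rw [h1, ih, h0, zero_add]

lemma term_apply (e : ℤ) (c : ℕ) (k : ℤ) :
    (T e * (-T 2 - T (-2)) ^ c : LaurentPolynomial ℚ).coeff k = (-1 : ℚ) ^ c * (q ^ c).coeff (k - e) := by
  have hq : (-T 2 - T (-2) : LaurentPolynomial ℚ) = -q := by rw [q]; ring
  have h1 : ((-T 2 - T (-2) : LaurentPolynomial ℚ)) ^ c = C ((-1 : ℚ) ^ c) * q ^ c := by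
    rw [hq, neg_pow]
    congr 1
    rw [map_pow, map_neg, _root_.map_one]
  rw [h1, mul_left_comm, apply_C_mul, apply_T_mul]

lemma bracket_apply {V : Type} [Fintype V] (G : SimpleGraph V) (σ : V → Bool) (k : ℤ) :
    (bracket G σ).coeff k = ∑ s : Finset V,
      (-1 : ℚ) ^ (corankS G s) *
        (q ^ (corankS G s)).coeff (k - (2 * (alphaCount σ s : ℤ) - (Fintype.card V : ℤ))) := by
  rw [bracket, AddMonoidAlgebra.coeff_sum, Finsupp.finset_sum_apply]
  exact Finset.sum_congr rfl fun s _ => term_apply _ _ _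




variable {V : Type} [Fintype V]

lemma filter_false_eq_inter (σ : V → Bool) (s : Finset V) :
    s.filter (fun i => σ i = false) = s ∩ Finset.univ.filter (fun i => σ i = false) := by
  ext i; simp [Finset.mem_filter, Finset.mem_inter]

lemma compl_filter_true (σ : V → Bool) (s : Finset V) :
    (sᶜ).filter (fun i => σ i = true) = Finset.univ.filter (fun i => σ i = true) \ s := by
  ext i; simp [Finset.mem_filter, Finset.mem_sdiff, Finset.mem_compl]; tauto

lemma alpha_add_inter (σ : V → Bool) (s : Finset V) :
    alphaCount σ s + ((Finset.univ.filter (fun i => σ i = true)) ∩ s).card =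
      (s ∩ Finset.univ.filter (fun i => σ i = false)).card +
        (Finset.univ.filter (fun i => σ i = true)).card := by
  rw [alphaCount, filter_false_eq_inter, compl_filter_true, add_assoc,
    Finset.card_sdiff_add_card_inter]

lemma s_split (σ : V → Bool) (s : Finset V) :
    (s ∩ Finset.univ.filter (fun i => σ i = false)).card +
      (s ∩ Finset.univ.filter (fun i => σ i = true)).card = s.card := by
  rw [← filter_false_eq_inter]
  have : s ∩ Finset.univ.filter (fun i => σ i = true) = s.filter (fun i => ¬ σ i = false) := by
    ext i; simp [Finset.mem_filter, Finset.mem_inter]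
  rw [this]
  exact Finset.card_filter_add_card_filter_not _

lemma MP_split (σ : V → Bool) :
    (Finset.univ.filter (fun i => σ i = false)).card +
      (Finset.univ.filter (fun i => σ i = true)).card = Fintype.card V := by
  have h := s_split σ (Finset.univ : Finset V)
  simpa [Finset.univ_inter, Finset.card_univ] using h

variable (G : SimpleGraph V)

lemma rank_le_cardS (s : Finset V) : (adjMatS G s).rank ≤ s.card := by
  have := Matrix.rank_le_card_width (adjMatS G s)
  simpa [Fintype.card_coe] using this

lemma no_edge_of_zero {s : Finset V} (h : adjMatS G s = 0) {i j : V}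
    (hi : i ∈ s) (hj : j ∈ s) : ¬ G.Adj i j := by
  intro hadj
  have h2 := congrFun (congrFun h ⟨i, hi⟩) ⟨j, hj⟩
  rw [adjMatS] at h2
  simp only [if_pos hadj] at h2
  exact one_ne_zero h2

lemma rank_pos_of_edge {s : Finset V} {i j : V} (hi : i ∈ s) (hj : j ∈ s)
    (hadj : G.Adj i j) : 1 ≤ (adjMatS G s).rank := by
  rw [Nat.one_le_iff_ne_zero]
  intro h0
  exact no_edge_of_zero G ((mrank_zero_iff _).mp h0) hi hj hadj

lemma coeff_bound (σ : V → Bool) (k : ℤ) (h : (bracket G σ).coeff k ≠ 0) :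
    -(((Finset.univ.filter (fun i => σ i = false)).card : ℤ) +
        3 * (Finset.univ.filter (fun i => σ i = true)).card) ≤ k ∧
      k ≤ 3 * ((Finset.univ.filter (fun i => σ i = false)).card : ℤ) +
        (Finset.univ.filter (fun i => σ i = true)).card := by
  rw [bracket_apply] at h
  obtain ⟨s, -, hs⟩ := Finset.exists_ne_zero_of_sum_ne_zero h
  have hq : (q ^ (corankS G s)).coeff (k - (2 * (alphaCount σ s : ℤ) - (Fintype.card V : ℤ))) ≠ 0 := by
    intro h'
    rw [h', mul_zero] at hs
    exact hs rfl
  obtain ⟨h1, h2⟩ := q_pow_bound _ _ hq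
  have e1 := alpha_add_inter σ s
  have e2 := s_split σ s
  have e3 := MP_split σ
  have e4 : corankS G s ≤ s.card := Nat.sub_le _ _
  have e5 : (s ∩ Finset.univ.filter (fun i => σ i = false)).card ≤
      (Finset.univ.filter (fun i => σ i = false)).card :=
    Finset.card_le_card Finset.inter_subset_right
  have e6 : (s ∩ Finset.univ.filter (fun i => σ i = true)).card ≤
      (Finset.univ.filter (fun i => σ i = true)).card :=
    Finset.card_le_card Finset.inter_subset_right
  have e7 : ((Finset.univ.filter (fun i => σ i = true)) ∩ s).card =
      (s ∩ Finset.univ.filter (fun i => σ i = true)).card := by rw [Finset.inter_comm]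
  rw [e7] at e1
  omega


end AltAux

open AltAux

/-- An alternating labeled graph without isolated vertices has span⟨G⟩ = 4n and
is minimal: any labeled graph whose bracket agrees with ⟨G⟩ up to a unit
(-a)^{3m} has at least n vertices. -/
theorem alternating_minimal {V : Type} [Fintype V] (G : SimpleGraph V)
    (σ : V → Bool)
    (halt : corankS G (Finset.univ.filter (fun i => σ i = false)) +
      corankS G (Finset.univ.filter (fun i => σ i = true)) = Fintype.card V)
    (hiso : ∀ x : V, ∃ y : V, G.Adj x y) :
    lspan (bracket G σ) = 4 * (Fintype.card V : ℤ) ∧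
    ∀ (n' : ℕ) (G' : SimpleGraph (Fin n')) (σ' : Fin n' → Bool) (m : ℤ),
      bracket G' σ' = C ((-1 : ℚ) ^ m) * T (3 * m) * bracket G σ →
      Fintype.card V ≤ n' := by
  set n := Fintype.card V with hn
  set Ms := Finset.univ.filter (fun i => σ i = false) with hMs
  set Ps := Finset.univ.filter (fun i => σ i = true) with hPs
  have hsplit : Ms.card + Ps.card = n := AltAux.MP_split σ
  have hrM : (adjMatS G Ms).rank ≤ Ms.card := AltAux.rank_le_cardS G Ms
  have hrP : (adjMatS G Ps).rank ≤ Ps.card := AltAux.rank_le_cardS G Ps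
  have hzero : (adjMatS G Ms).rank = 0 ∧ (adjMatS G Ps).rank = 0 := by
    rw [corankS, corankS] at halt
    omega
  have hM0 : adjMatS G Ms = 0 := (AltAux.mrank_zero_iff _).mp hzero.1
  have hP0 : adjMatS G Ps = 0 := (AltAux.mrank_zero_iff _).mp hzero.2
  have hmemP : ∀ i : V, i ∉ Ms → i ∈ Ps := by
    intro i hi
    simp only [hMs, Finset.mem_filter, Finset.mem_univ, true_and] at hi
    simp only [hPs, Finset.mem_filter, Finset.mem_univ, true_and]
    simpa using hi
  have hmemM : ∀ i : V, i ∉ Ps → i ∈ Ms := by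
    intro i hi
    simp only [hPs, Finset.mem_filter, Finset.mem_univ, true_and] at hi
    simp only [hMs, Finset.mem_filter, Finset.mem_univ, true_and]
    simpa using hi
  -- strict upper degree bound for s ≠ Ms
  have htop : ∀ s : Finset V, s ≠ Ms →
      2 * (alphaCount σ s : ℤ) - n + 2 * (corankS G s) < (n : ℤ) + 2 * Ms.card := by
    intro s hs
    have e1 := AltAux.alpha_add_inter σ s
    have e2 := AltAux.s_split σ s
    have e4 : (adjMatS G s).rank ≤ s.card := AltAux.rank_le_cardS G s
    have e5 : (s ∩ Ms).card ≤ Ms.card := Finset.card_le_card Finset.inter_subset_right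
    have e7 : (Ps ∩ s).card = (s ∩ Ps).card := by rw [Finset.inter_comm]
    rw [← hMs, ← hPs] at e1 e2
    rw [e7] at e1
    have hc : corankS G s = s.card - (adjMatS G s).rank := rfl
    rcases lt_or_eq_of_le e5 with hlt | heq
    · rw [hc]; omega
    · have hsub : Ms ⊆ s := by
        have h9 : s ∩ Ms = Ms :=
          Finset.eq_of_subset_of_card_le Finset.inter_subset_right (le_of_eq heq.symm)
        intro x hx
        rw [← h9] at hx
        exact (Finset.mem_inter.mp hx).1
      have hx : ∃ x, x ∈ s ∧ x ∉ Ms := by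
        by_contra hno
        push_neg at hno
        exact hs (Finset.Subset.antisymm hno hsub)
      obtain ⟨x, hxs, hxM⟩ := hx
      obtain ⟨y, hy⟩ := hiso x
      have hyM : y ∈ Ms := by
        by_contra hyM
        exact AltAux.no_edge_of_zero G hP0 (hmemP x hxM) (hmemP y hyM) hy
      have hrank : 1 ≤ (adjMatS G s).rank := AltAux.rank_pos_of_edge G hxs (hsub hyM) hy
      rw [hc]; omega
  -- strict lower degree bound for s ≠ Ps
  have hbot : ∀ s : Finset V, s ≠ Ps →
      -((n : ℤ) + 2 * Ps.card) < 2 * (alphaCount σ s : ℤ) - n - 2 * (corankS G s) := by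
    intro s hs
    have e1 := AltAux.alpha_add_inter σ s
    have e2 := AltAux.s_split σ s
    have e4 : (adjMatS G s).rank ≤ s.card := AltAux.rank_le_cardS G s
    have e6 : (s ∩ Ps).card ≤ Ps.card := Finset.card_le_card Finset.inter_subset_right
    have e7 : (Ps ∩ s).card = (s ∩ Ps).card := by rw [Finset.inter_comm]
    rw [← hMs, ← hPs] at e1 e2
    rw [e7] at e1
    have hc : corankS G s = s.card - (adjMatS G s).rank := rfl
    rcases lt_or_eq_of_le e6 with hlt | heq
    · rw [hc]; omega
    · have hsub : Ps ⊆ s := by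
        have h9 : s ∩ Ps = Ps :=
          Finset.eq_of_subset_of_card_le Finset.inter_subset_right (le_of_eq heq.symm)
        intro x hx
        rw [← h9] at hx
        exact (Finset.mem_inter.mp hx).1
      have hx : ∃ x, x ∈ s ∧ x ∉ Ps := by
        by_contra hno
        push_neg at hno
        exact hs (Finset.Subset.antisymm hno hsub)
      obtain ⟨x, hxs, hxP⟩ := hx
      obtain ⟨y, hy⟩ := hiso x
      have hyP : y ∈ Ps := by
        by_contra hyP
        exact AltAux.no_edge_of_zero G hM0 (hmemM x hxP) (hmemM y hyP) hy
      have hrank : 1 ≤ (adjMatS G s).rank := AltAux.rank_pos_of_edge G hxs (hsub hyP) hy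
      rw [hc]; omega
  have hαM : alphaCount σ Ms = n := by
    rw [alphaCount]
    have h1 : Ms.filter (fun i => σ i = false) = Ms := by
      ext i
      simp only [hMs, Finset.mem_filter, Finset.mem_univ, true_and, and_self]
    have h2 : (Msᶜ).filter (fun i => σ i = true) = Ps := by
      ext i
      simp only [hMs, hPs, Finset.mem_filter, Finset.mem_compl, Finset.mem_univ, true_and]
      cases h : σ i <;> simp
    rw [h1, h2]
    exact hsplit
  have hαP : alphaCount σ Ps = 0 := by
    rw [alphaCount]
    have h1 : Ps.filter (fun i => σ i = false) = ∅ := by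
      ext i
      simp only [hPs, Finset.mem_filter, Finset.mem_univ, true_and, Finset.notMem_empty,
        iff_false, not_and]
      cases h : σ i <;> simp
    have h2 : (Psᶜ).filter (fun i => σ i = true) = ∅ := by
      ext i
      simp only [hPs, Finset.mem_filter, Finset.mem_compl, Finset.mem_univ, true_and,
        Finset.notMem_empty, iff_false, not_and]
      cases h : σ i <;> simp
    rw [h1, h2]
    simp
  have hcM : corankS G Ms = Ms.card := by
    rw [corankS, hzero.1, Nat.sub_zero]
  have hcP : corankS G Ps = Ps.card := by
    rw [corankS, hzero.2, Nat.sub_zero]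
  -- the coefficient at the top degree
  have hcoeffD : (bracket G σ).coeff ((n : ℤ) + 2 * Ms.card) = (-1 : ℚ) ^ Ms.card := by
    rw [AltAux.bracket_apply]
    rw [← hn]
    rw [Finset.sum_eq_single Ms]
    · rw [hαM, hcM]
      have harg : ((n : ℤ) + 2 * Ms.card) - (2 * (n : ℤ) - n) = 2 * Ms.card := by ring
      rw [harg, AltAux.q_pow_top, mul_one]
    · intro s _ hs
      have hlt := htop s hs
      have hq0 : (q ^ corankS G s).coeff (((n : ℤ) + 2 * Ms.card) - (2 * (alphaCount σ s : ℤ) - n)) = 0 := by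
        by_contra h
        have := (AltAux.q_pow_bound _ _ h).2
        omega
      rw [hq0, mul_zero]
    · intro h
      exact absurd (Finset.mem_univ Ms) h
  have hcoeffE : (bracket G σ).coeff (-((n : ℤ) + 2 * Ps.card)) = (-1 : ℚ) ^ Ps.card := by
    rw [AltAux.bracket_apply]
    rw [← hn]
    rw [Finset.sum_eq_single Ps]
    · rw [hαP, hcP]
      have harg : (-((n : ℤ) + 2 * Ps.card)) - (2 * ((0 : ℕ) : ℤ) - n) = -(2 * Ps.card) := by
        push_cast; ring
      rw [harg, AltAux.q_pow_bot, mul_one]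
    · intro s _ hs
      have hlt := hbot s hs
      have hq0 : (q ^ corankS G s).coeff ((-((n : ℤ) + 2 * Ps.card)) - (2 * (alphaCount σ s : ℤ) - n)) = 0 := by
        by_contra h
        have := (AltAux.q_pow_bound _ _ h).1
        omega
      rw [hq0, mul_zero]
    · intro h
      exact absurd (Finset.mem_univ Ps) h
  -- all coefficients vanish above/below
  have hleD : ∀ k : ℤ, (bracket G σ).coeff k ≠ 0 → k ≤ (n : ℤ) + 2 * Ms.card := by
    intro k hk
    by_contra hgt
    push_neg at hgt
    apply hk
    rw [AltAux.bracket_apply, ← hn]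
    apply Finset.sum_eq_zero
    intro s _
    have hb : 2 * (alphaCount σ s : ℤ) - n + 2 * (corankS G s) ≤ (n : ℤ) + 2 * Ms.card := by
      rcases eq_or_ne s Ms with rfl | hne
      · rw [hαM, hcM]; push_cast; ring_nf; omega
      · exact le_of_lt (htop s hne)
    have hq0 : (q ^ corankS G s).coeff (k - (2 * (alphaCount σ s : ℤ) - n)) = 0 := by
      by_contra h
      have := (AltAux.q_pow_bound _ _ h).2
      omega
    rw [hq0, mul_zero]
  have hgeE : ∀ k : ℤ, (bracket G σ).coeff k ≠ 0 → -((n : ℤ) + 2 * Ps.card) ≤ k := by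
    intro k hk
    by_contra hgt
    push_neg at hgt
    apply hk
    rw [AltAux.bracket_apply, ← hn]
    apply Finset.sum_eq_zero
    intro s _
    have hb : -((n : ℤ) + 2 * Ps.card) ≤ 2 * (alphaCount σ s : ℤ) - n - 2 * (corankS G s) := by
      rcases eq_or_ne s Ps with rfl | hne
      · rw [hαP, hcP]; push_cast; ring_nf; omega
      · exact le_of_lt (hbot s hne)
    have hq0 : (q ^ corankS G s).coeff (k - (2 * (alphaCount σ s : ℤ) - n)) = 0 := by
      by_contra h
      have := (AltAux.q_pow_bound _ _ h).1
      omega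
    rw [hq0, mul_zero]
  have hD_mem : ((n : ℤ) + 2 * Ms.card) ∈ (bracket G σ).coeff.support := by
    rw [Finsupp.mem_support_iff, hcoeffD]
    exact pow_ne_zero _ (by norm_num)
  have hE_mem : (-((n : ℤ) + 2 * Ps.card)) ∈ (bracket G σ).coeff.support := by
    rw [Finsupp.mem_support_iff, hcoeffE]
    exact pow_ne_zero _ (by norm_num)
  have hne : (bracket G σ).coeff.support.Nonempty := ⟨_, hD_mem⟩
  constructor
  · -- span computation
    have hmax' : (bracket G σ).coeff.support.max' hne = (n : ℤ) + 2 * Ms.card :=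
      le_antisymm
        (Finset.max'_le _ _ _ fun k hk => hleD k (Finsupp.mem_support_iff.mp hk))
        (Finset.le_max' _ _ hD_mem)
    have hmin' : (bracket G σ).coeff.support.min' hne = -((n : ℤ) + 2 * Ps.card) :=
      le_antisymm
        (Finset.min'_le _ _ hE_mem)
        (Finset.le_min' _ _ _ fun k hk => hgeE k (Finsupp.mem_support_iff.mp hk))
    have hmaxv : (bracket G σ).coeff.support.max = ((n : ℤ) + 2 * Ms.card : ℤ) := by
      rw [← Finset.coe_max' hne, hmax']
    have hminv : (bracket G σ).coeff.support.min = ((-((n : ℤ) + 2 * Ps.card) : ℤ) : WithTop ℤ) := by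
      rw [← Finset.coe_min' hne, hmin']
    rw [lspan, hmaxv, hminv]
    rw [WithBot.unbotD_coe, WithTop.untopD_coe]
    push_cast
    omega
  · -- minimality
    intro n' G' σ' m hb
    have happ : ∀ k : ℤ, (bracket G' σ').coeff k = (-1 : ℚ) ^ m * (bracket G σ).coeff (k - 3 * m) := by
      intro k
      rw [hb, mul_assoc, AltAux.apply_C_mul, AltAux.apply_T_mul]
    have hu : ((-1 : ℚ) ^ m) ≠ 0 := zpow_ne_zero _ (by norm_num)
    have hD' : (bracket G' σ').coeff ((n : ℤ) + 2 * Ms.card + 3 * m) ≠ 0 := by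
      rw [happ, add_sub_cancel_right, hcoeffD]
      exact mul_ne_zero hu (pow_ne_zero _ (by norm_num))
    have hE' : (bracket G' σ').coeff (-((n : ℤ) + 2 * Ps.card) + 3 * m) ≠ 0 := by
      rw [happ, add_sub_cancel_right, hcoeffE]
      exact mul_ne_zero hu (pow_ne_zero _ (by norm_num))
    have b1 := (AltAux.coeff_bound G' σ' _ hD').2
    have b2 := (AltAux.coeff_bound G' σ' _ hE').1
    have hsplit' := AltAux.MP_split σ'
    rw [Fintype.card_fin] at hsplit'
    omega
end
end

section
/- Let G be a labeled graph with corank(A(G)+E) = 0, and for each vertex v_i define w_i = (−1)^{corank(A(G)+E+E_{ii})} · sign(v_i) and the writhe w(G) = Σ_i w_i. Define the Jones polynomial X(G) = (−a)^{−3 w(G)} ⟨G⟩. If G~ is obtained from G by adding an isolated vertex with either label, then X(G~) = X(G). -/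
open Matrix LaurentPolynomial
open scoped Classical

noncomputable section

-- auxiliary lemmas (to be inserted before the theorem)

section Aux

lemma myrange_prodMap {R : Type*} [Ring R] {M M₂ M₃ M₄ : Type*}
    [AddCommGroup M] [AddCommGroup M₂] [AddCommGroup M₃] [AddCommGroup M₄]
    [Module R M] [Module R M₂] [Module R M₃] [Module R M₄]
    (f : M →ₗ[R] M₂) (g : M₃ →ₗ[R] M₄) :
    LinearMap.range (f.prodMap g) = (LinearMap.range f).prod (LinearMap.range g) := by
  ext ⟨x, y⟩
  simp only [LinearMap.mem_range, Submodule.mem_prod, LinearMap.prodMap_apply, Prod.mk.injEq,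
    Prod.exists]
  constructor
  · rintro ⟨a, b, h1, h2⟩; exact ⟨⟨a, h1⟩, ⟨b, h2⟩⟩
  · rintro ⟨⟨a, h1⟩, ⟨b, h2⟩⟩; exact ⟨a, b, h1, h2⟩

def myProdEquiv {R M N : Type*} [Ring R] [AddCommGroup M] [AddCommGroup N]
    [Module R M] [Module R N] (p : Submodule R M) (q : Submodule R N) :
    (p.prod q) ≃ₗ[R] p × q where
  toFun x := (⟨x.1.1, x.2.1⟩, ⟨x.1.2, x.2.2⟩)
  map_add' := by rintro ⟨⟨a, b⟩, h⟩ ⟨⟨c, d⟩, h'⟩; rfl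
  map_smul' := by rintro r ⟨⟨a, b⟩, h⟩; rfl
  invFun x := ⟨(x.1.1, x.2.1), ⟨x.1.2, x.2.2⟩⟩
  left_inv := by rintro ⟨⟨a, b⟩, h⟩; rfl
  right_inv := by rintro ⟨⟨a, h⟩, ⟨b, h'⟩⟩; rfl

lemma rank_fromBlocks_diag {K : Type*} [Field K] {m n : Type} [Fintype m] [Fintype n]
    (A : Matrix m m K) (D : Matrix n n K) :
    (Matrix.fromBlocks A 0 0 D).rank = A.rank + D.rank := by
  set e := LinearEquiv.sumArrowLequivProdArrow m n K K with he
  have hfun : (Matrix.fromBlocks A 0 0 D).mulVecLin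
      = (e.symm.toLinearMap ∘ₗ (A.mulVecLin.prodMap D.mulVecLin)) ∘ₗ e.toLinearMap := by
    apply LinearMap.ext; intro v; funext x
    cases x <;>
      simp [e, Matrix.mulVecLin_apply, Matrix.fromBlocks_mulVec, Matrix.zero_mulVec,
        LinearEquiv.sumArrowLequivProdArrow, Equiv.sumArrowEquivProdArrow]
  rw [Matrix.rank, hfun, LinearMap.range_comp, LinearEquiv.range, Submodule.map_top,
    LinearMap.range_comp, myrange_prodMap]
  rw [LinearEquiv.finrank_map_eq]
  rw [(myProdEquiv _ _).finrank_eq, Module.finrank_prod]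
  rfl

variable {V : Type}

@[simp] lemma optExt_adj_some_some (G : SimpleGraph V) (i j : V) :
    (optExt G).Adj (some i) (some j) ↔ G.Adj i j := Iff.rfl

@[simp] lemma optExt_adj_some_none (G : SimpleGraph V) (i : V) :
    ¬ (optExt G).Adj (some i) none := fun h => h

@[simp] lemma optExt_adj_none (G : SimpleGraph V) (y : Option V) :
    ¬ (optExt G).Adj none y := by cases y <;> exact fun h => h

/-- `↥s ⊕ Unit ≃ ↥(insertNone s)` -/
def eIns (s : Finset V) : (↥s ⊕ Unit) ≃ {y : Option V // y ∈ Finset.insertNone s} where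
  toFun x := match x with
    | .inl i => ⟨some i.1, by simp [i.2]⟩
    | .inr _ => ⟨none, by simp⟩
  invFun y := match y with
    | ⟨none, _⟩ => Sum.inr ()
    | ⟨some a, h⟩ => Sum.inl ⟨a, by simpa using h⟩
  left_inv := by rintro (⟨i, hi⟩ | ⟨⟩) <;> rfl
  right_inv := by rintro ⟨(_ | a), h⟩ <;> rfl

/-- `↥s ≃ ↥(s.map some)` -/
def eSome (s : Finset V) : ↥s ≃ {y : Option V // y ∈ s.map Function.Embedding.some} where
  toFun i := ⟨some i.1, by simp⟩
  invFun y := match y with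
    | ⟨some a, h⟩ => ⟨a, by simpa using h⟩
    | ⟨none, h⟩ => absurd h (by simp)
  left_inv := by rintro ⟨i, hi⟩; rfl
  right_inv := by
    rintro ⟨(_ | a), h⟩
    · exact absurd h (by simp)
    · rfl

/-- `V ⊕ Unit ≃ Option V` -/
def eOV : (V ⊕ Unit) ≃ Option V where
  toFun := Sum.elim some (fun _ => none)
  invFun o := match o with
    | some a => .inl a
    | none => .inr ()
  left_inv := by rintro (a | ⟨⟩) <;> rfl
  right_inv := by rintro (_ | a) <;> rfl

end Aux
section Aux2
variable {V : Type}

lemma adjMatS_map_some (G : SimpleGraph V) (s : Finset V) :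
    adjMatS (optExt G) (s.map Function.Embedding.some)
      = (adjMatS G s).submatrix (eSome s).symm (eSome s).symm := by
  ext i j
  have hi : i.1 = some (((eSome s).symm i).1) :=
    congrArg Subtype.val ((eSome s).right_inv i).symm
  have hj : j.1 = some (((eSome s).symm j).1) :=
    congrArg Subtype.val ((eSome s).right_inv j).symm
  simp only [adjMatS, Matrix.submatrix_apply]
  have : (optExt G).Adj i.1 j.1 ↔ G.Adj ((eSome s).symm i).1 ((eSome s).symm j).1 := by
    rw [hi, hj]; exact Iff.rfl
  simp [this]

lemma rank_adjMatS_map_some (G : SimpleGraph V) (s : Finset V) :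
    (adjMatS (optExt G) (s.map Function.Embedding.some)).rank = (adjMatS G s).rank := by
  rw [adjMatS_map_some, Matrix.rank_submatrix]

lemma adjMatS_insertNone (G : SimpleGraph V) (s : Finset V) :
    (adjMatS (optExt G) (Finset.insertNone s)).submatrix (eIns s) (eIns s)
      = Matrix.fromBlocks (adjMatS G s) 0 0 (0 : Matrix Unit Unit (ZMod 2)) := by
  ext i j
  rcases i with (i | u) <;> rcases j with (j | u') <;>
    simp only [Matrix.submatrix_apply, adjMatS, eIns, Matrix.fromBlocks_apply₁₁,
      Matrix.fromBlocks_apply₁₂, Matrix.fromBlocks_apply₂₁, Matrix.fromBlocks_apply₂₂,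
      Matrix.zero_apply] <;> simp

lemma rank_adjMatS_insertNone (G : SimpleGraph V) (s : Finset V) :
    (adjMatS (optExt G) (Finset.insertNone s)).rank = (adjMatS G s).rank := by
  rw [← Matrix.rank_submatrix (adjMatS (optExt G) (Finset.insertNone s)) (eIns s) (eIns s),
    adjMatS_insertNone, rank_fromBlocks_diag, Matrix.rank_zero, add_zero]

lemma rank_adjMatS_le (G : SimpleGraph V) (s : Finset V) :
    (adjMatS G s).rank ≤ s.card := by
  simpa [Fintype.card_coe] using Matrix.rank_le_card_height (adjMatS G s)

lemma corankS_map_some (G : SimpleGraph V) (s : Finset V) :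
    corankS (optExt G) (s.map Function.Embedding.some) = corankS G s := by
  simp [corankS, rank_adjMatS_map_some, Finset.card_map]

lemma corankS_insertNone (G : SimpleGraph V) (s : Finset V) :
    corankS (optExt G) (Finset.insertNone s) = corankS G s + 1 := by
  have := rank_adjMatS_le G s
  simp only [corankS, rank_adjMatS_insertNone, Finset.card_insertNone]
  omega

end Aux2
section Aux3
variable {V : Type} [Fintype V]

lemma Bmat_none (G : SimpleGraph V) :
    (Bmat (optExt G) none).submatrix (eOV (V := V)) (eOV (V := V))
      = Matrix.fromBlocks (adjMat G + 1) 0 0 (0 : Matrix Unit Unit (ZMod 2)) := by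
  ext i j
  rcases i with (i | u) <;> rcases j with (j | u') <;>
    simp [Bmat, adjMat, eOV, Matrix.add_apply, Matrix.one_apply, Matrix.single,
      Matrix.of_apply]
  decide

lemma Bmat_some (G : SimpleGraph V) (x : V) :
    (Bmat (optExt G) (some x)).submatrix (eOV (V := V)) (eOV (V := V))
      = Matrix.fromBlocks (Bmat G x) 0 0 (1 : Matrix Unit Unit (ZMod 2)) := by
  ext i j
  rcases i with (i | u) <;> rcases j with (j | u') <;>
    simp [Bmat, adjMat, eOV, Matrix.add_apply, Matrix.one_apply, Matrix.single,
      Matrix.of_apply]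

lemma corankM_Bmat_some (G : SimpleGraph V) (x : V) :
    corankM (Bmat (optExt G) (some x)) = corankM (Bmat G x) := by
  have h1 : (Bmat (optExt G) (some x)).rank = (Bmat G x).rank + 1 := by
    rw [← Matrix.rank_submatrix (Bmat (optExt G) (some x)) eOV eOV, Bmat_some,
      rank_fromBlocks_diag, Matrix.rank_one]
    simp
  simp only [corankM, h1, Fintype.card_option]
  omega

lemma corankM_Bmat_none (G : SimpleGraph V) (h : corankM (adjMat G + 1) = 0) :
    corankM (Bmat (optExt G) none) = 1 := by
  have h1 : (Bmat (optExt G) none).rank = (adjMat G + 1).rank := by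
    rw [← Matrix.rank_submatrix (Bmat (optExt G) none) eOV eOV, Bmat_none,
      rank_fromBlocks_diag, Matrix.rank_zero, add_zero]
  have h2 : (adjMat G + 1).rank ≤ Fintype.card V := Matrix.rank_le_card_height _
  simp only [corankM] at h ⊢
  rw [h1, Fintype.card_option]
  omega

lemma writhe_optExt (G : SimpleGraph V) (σ : V → Bool) (b : Bool)
    (h : corankM (adjMat G + 1) = 0) :
    writhe (optExt G) (fun x => x.elim b σ) = writhe G σ + (if b then -1 else 1) := by
  rw [writhe, Fintype.sum_option]
  have hnone : (-1 : ℤ) ^ corankM (Bmat (optExt G) none)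
      * (if (none : Option V).elim b σ then 1 else -1) = (if b then -1 else 1) := by
    rw [corankM_Bmat_none G h]
    cases b <;> simp
  rw [hnone]
  have hsum : ∑ x : V, (-1 : ℤ) ^ corankM (Bmat (optExt G) (some x))
      * (if (Option.some x).elim b σ then 1 else -1) = writhe G σ := by
    rw [writhe]
    exact Finset.sum_congr rfl fun x _ => by rw [corankM_Bmat_some]; rfl
  rw [hsum, add_comm]

end Aux3
section Aux4
variable {V : Type} [Fintype V]

def myCompl {α : Type} [Fintype α] (t : Finset α) : Finset α :=
  @Compl.compl (Finset α)
    (@BooleanAlgebra.toCompl _ (@Finset.booleanAlgebra α _ (Classical.decEq α))) t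

@[simp] lemma mem_myCompl {α : Type} [Fintype α] {t : Finset α} {a : α} :
    a ∈ myCompl t ↔ a ∉ t := Finset.mem_compl

lemma compl_congr {α : Type} [Fintype α] (i1 : DecidableEq α) (t : Finset α) :
    @Compl.compl (Finset α)
      (@BooleanAlgebra.toCompl _ (@Finset.booleanAlgebra α _ i1)) t = myCompl t := by
  unfold myCompl
  rw [Subsingleton.elim i1 (Classical.decEq α)]

lemma compl_map_some (s : Finset V) :
    myCompl (s.map Function.Embedding.some) = Finset.insertNone (myCompl s) := by
  ext o; cases o <;> simp

lemma compl_insertNone (s : Finset V) :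
    myCompl (Finset.insertNone s) = (myCompl s).map Function.Embedding.some := by
  ext o; cases o <;> simp

lemma insertNone_eq_cons (s : Finset V) :
    Finset.insertNone s = Finset.cons none (s.map Function.Embedding.some) (by simp) := by
  ext o; cases o <;> simp

lemma card_filter_map_some (s : Finset V) (p : Option V → Prop) [DecidablePred p] :
    ((s.map Function.Embedding.some).filter p).card = (s.filter (fun a => p (some a))).card := by
  rw [Finset.filter_map, Finset.card_map]
  rfl

lemma card_filter_insertNone (s : Finset V) (p : Option V → Prop) [DecidablePred p] :
    ((Finset.insertNone s).filter p).card
      = (if p none then 1 else 0) + (s.filter (fun a => p (some a))).card := by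
  rw [insertNone_eq_cons, Finset.filter_cons]
  split_ifs with h
  · rw [Finset.card_cons, card_filter_map_some]; omega
  · rw [card_filter_map_some]; omega

lemma alphaCount_map_some (σ : V → Bool) (b : Bool) (s : Finset V) :
    alphaCount (fun x => x.elim b σ) (s.map Function.Embedding.some)
      = alphaCount σ s + (if b then 1 else 0) := by
  rw [alphaCount, alphaCount, compl_congr, compl_congr, compl_map_some, card_filter_map_some,
    card_filter_insertNone]
  simp only [Option.elim]
  cases b <;> simp <;> ac_rfl

lemma alphaCount_insertNone (σ : V → Bool) (b : Bool) (s : Finset V) :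
    alphaCount (fun x => x.elim b σ) (Finset.insertNone s)
      = alphaCount σ s + (if b then 0 else 1) := by
  rw [alphaCount, alphaCount, compl_congr, compl_congr, compl_insertNone, card_filter_map_some,
    card_filter_insertNone]
  simp only [Option.elim]
  cases b <;> simp <;> ac_rfl

/-- `Finset V ⊕ Finset V ≃ Finset (Option V)` : inl s ↦ s.map some, inr s ↦ insertNone s -/
def eFin {V : Type} : (Finset V ⊕ Finset V) ≃ Finset (Option V) where
  toFun := Sum.elim (fun s => s.map Function.Embedding.some) Finset.insertNone
  invFun t := if none ∈ t then Sum.inr (Finset.eraseNone t) else Sum.inl (Finset.eraseNone t)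
  left_inv := by
    rintro (s | s) <;> dsimp only [Sum.elim_inl, Sum.elim_inr]
    · rw [if_neg (by simp), Finset.eraseNone_map_some]
    · rw [if_pos (by simp), Finset.eraseNone_insertNone]
  right_inv := by
    intro t
    dsimp only
    by_cases h : none ∈ t
    · rw [if_pos h, Sum.elim_inr]
      ext o; cases o <;> simp [h]
    · rw [if_neg h, Sum.elim_inl, Finset.map_some_eraseNone, Finset.erase_eq_of_notMem h]

end Aux4
section Aux5
variable {V : Type} [Fintype V]

lemma T_key_true : T (-1 : ℤ) * (-T 2 - T (-2)) + T 1 = (-T (-3) : LaurentPolynomial ℚ) := by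
  rw [mul_sub, mul_neg, ← T_add, ← T_add]
  norm_num
  ring

lemma T_key_false : T (1 : ℤ) * (-T 2 - T (-2)) + T (-1) = (-T 3 : LaurentPolynomial ℚ) := by
  rw [mul_sub, mul_neg, ← T_add, ← T_add]
  norm_num

lemma T_key_f (m : ℤ) :
    T (m - 1) + (-T 2 - T (-2)) * T (m + 1) = (-T (m + 3) : LaurentPolynomial ℚ) := by
  rw [sub_mul, neg_mul, ← T_add, ← T_add,
    show (2 + (m + 1)) = m + 3 from by ring, show (-2 + (m + 1)) = m - 1 from by ring]
  ring

lemma T_key_t (m : ℤ) :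
    T (m + 1) + (-T 2 - T (-2)) * T (m - 1) = (-T (m + -3) : LaurentPolynomial ℚ) := by
  rw [sub_mul, neg_mul, ← T_add, ← T_add,
    show (2 + (m - 1)) = m + 1 from by ring, show (-2 + (m - 1)) = m + -3 from by ring]
  ring

lemma bracket_optExt (G : SimpleGraph V) (σ : V → Bool) (b : Bool) :
    bracket (optExt G) (fun x => x.elim b σ)
      = (-T (if b then (-3 : ℤ) else 3)) * bracket G σ := by
  rw [bracket, ← Equiv.sum_comp (eFin (V := V)), Fintype.sum_sum_type]
  rw [bracket, Finset.mul_sum, ← Finset.sum_add_distrib]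
  apply Finset.sum_congr rfl
  intro s _
  simp only [eFin, Equiv.coe_fn_mk, Sum.elim_inl, Sum.elim_inr]
  rw [alphaCount_map_some, alphaCount_insertNone, corankS_map_some, corankS_insertNone,
    Fintype.card_option]
  cases b
  · norm_num
    rw [show (2 * (alphaCount σ s : ℤ) - ((Fintype.card V : ℤ) + 1))
          = (2 * (alphaCount σ s : ℤ) - (Fintype.card V : ℤ)) - 1 from by ring,
      show (2 * ((alphaCount σ s : ℤ) + 1) - ((Fintype.card V : ℤ) + 1))
          = (2 * (alphaCount σ s : ℤ) - (Fintype.card V : ℤ)) + 1 from by ring,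
      pow_succ]
    linear_combination ((-T 2 - T (-2) : LaurentPolynomial ℚ) ^ corankS G s)
      * T_key_f (2 * (alphaCount σ s : ℤ) - (Fintype.card V : ℤ))
  · norm_num
    rw [show (2 * (alphaCount σ s : ℤ) - ((Fintype.card V : ℤ) + 1))
          = (2 * (alphaCount σ s : ℤ) - (Fintype.card V : ℤ)) - 1 from by ring,
      show (2 * ((alphaCount σ s : ℤ) + 1) - ((Fintype.card V : ℤ) + 1))
          = (2 * (alphaCount σ s : ℤ) - (Fintype.card V : ℤ)) + 1 from by ring,
      pow_succ]
    linear_combination ((-T 2 - T (-2) : LaurentPolynomial ℚ) ^ corankS G s)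
      * T_key_t (2 * (alphaCount σ s : ℤ) - (Fintype.card V : ℤ))

end Aux5

/-- The Jones polynomial X(G) = (-a)^{-3w(G)}⟨G⟩, with (-a)^m written as
(-1)^m · a^m. -/
def jones {V : Type} [Fintype V] (G : SimpleGraph V) (σ : V → Bool) :
    LaurentPolynomial ℚ :=
  C ((-1 : ℚ) ^ (-3 * writhe G σ)) * T (-3 * writhe G σ) * bracket G σ

/-- The Jones polynomial is invariant under adding an isolated vertex with
either label (Ω_g1). -/
theorem jones_isolated_vertex {V : Type} [Fintype V] (G : SimpleGraph V)
    (σ : V → Bool) (b : Bool) (h : corankM (adjMat G + 1) = 0) :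
    jones (optExt G) (fun x => x.elim b σ) = jones G σ := by
  have hTT1 : (T (-3) * T 3 : LaurentPolynomial ℚ) = 1 := by
    rw [← T_add]; norm_num
  cases b
  · have hw := writhe_optExt G σ false h
    have hbr := bracket_optExt G σ false
    norm_num at hw hbr
    rw [jones, jones, hw, hbr]
    rw [show (-3 * (writhe G σ + 1)) = (-3 * writhe G σ) + (-3) from by ring, T_add,
      zpow_add₀ (by norm_num : (-1 : ℚ) ≠ 0), _root_.map_mul,
      show ((-1 : ℚ) ^ (-3 : ℤ)) = -1 from by norm_num, map_neg, _root_.map_one]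
    linear_combination (C ((-1 : ℚ) ^ (-3 * writhe G σ)) * T (-3 * writhe G σ)
      * bracket G σ) * hTT1
  · have hw := writhe_optExt G σ true h
    have hbr := bracket_optExt G σ true
    norm_num at hw hbr
    rw [jones, jones, hw, hbr]
    rw [show (-3 * (writhe G σ + -1)) = (-3 * writhe G σ) + 3 from by ring, T_add,
      zpow_add₀ (by norm_num : (-1 : ℚ) ≠ 0), _root_.map_mul,
      show ((-1 : ℚ) ^ (3 : ℤ)) = -1 from by norm_num, map_neg, _root_.map_one]
    linear_combination (C ((-1 : ℚ) ^ (-3 * writhe G σ)) * T (-3 * writhe G σ)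
      * bracket G σ) * hTT1
end
end
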